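/- Let p be an odd prime and m a positive integer not divisible by p. Then ∑_{r=1}^{m} r·K_p(r,m) ≡ −q_p(m) (mod p), where K_p(r,m) = ∑_{0<k<p, m | k−rp} 1/k in ℤ/pℤ and q_p(m) = (m^{p−1} − 1)/p is the Fermat quotient. -/

import Mathlib

open Finset

/-! ### Auxiliary lemmas -/

section Aux

lemma injOn_smul_mod (p m : ℕ) (hp : p.Prime) (hpm : ¬ p ∣ m) :
    Set.InjOn (fun t => m * t % p) (Finset.Ioo 0 p) := by
  haveI : Fact p.Prime := ⟨hp⟩
  intro t1 h1 t2 h2 h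
  simp only [Finset.coe_Ioo, Set.mem_Ioo] at h1 h2
  simp only at h
  have hz : ((m * t1 : ℕ) : ZMod p) = ((m * t2 : ℕ) : ZMod p) := by
    rw [← ZMod.natCast_mod (m * t1) p, ← ZMod.natCast_mod (m * t2) p, h]
  have hm0 : (m : ZMod p) ≠ 0 := by
    simpa [ZMod.natCast_eq_zero_iff] using hpm
  push_cast at hz
  have ht : (t1 : ZMod p) = t2 := mul_left_cancel₀ hm0 hz
  have h' := (ZMod.natCast_eq_natCast_iff' t1 t2 p).mp ht
  rwa [Nat.mod_eq_of_lt h1.2, Nat.mod_eq_of_lt h2.2] at h'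

lemma mem_smul_mod (p m : ℕ) (hp : p.Prime) (hpm : ¬ p ∣ m) {t : ℕ}
    (ht : t ∈ Finset.Ioo 0 p) : m * t % p ∈ Finset.Ioo 0 p := by
  simp only [Finset.mem_Ioo] at ht ⊢
  refine ⟨Nat.pos_of_ne_zero ?_, Nat.mod_lt _ hp.pos⟩
  intro h0
  have : p ∣ m * t := Nat.dvd_of_mod_eq_zero h0
  rcases (Nat.Prime.dvd_mul hp).mp this with h | h
  · exact hpm h
  · exact absurd (Nat.le_of_dvd ht.1 h) (not_le.mpr ht.2)

lemma image_smul_mod (p m : ℕ) (hp : p.Prime) (hpm : ¬ p ∣ m) :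
    Finset.image (fun t => m * t % p) (Finset.Ioo 0 p) = Finset.Ioo 0 p := by
  apply Finset.eq_of_subset_of_card_le
  · intro k hk
    simp only [Finset.mem_image] at hk
    obtain ⟨t, ht, rfl⟩ := hk
    exact mem_smul_mod p m hp hpm ht
  · rw [Finset.card_image_of_injOn (injOn_smul_mod p m hp hpm)]

lemma image_sub (p : ℕ) :
    Finset.image (fun k => p - k) (Finset.Ioo 0 p) = Finset.Ioo 0 p := by
  apply Finset.eq_of_subset_of_card_le
  · intro k hk
    simp only [Finset.mem_image, Finset.mem_Ioo] at hk ⊢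
    obtain ⟨t, ⟨ht1, ht2⟩, rfl⟩ := hk
    omega
  · rw [Finset.card_image_of_injOn]
    intro a ha b hb h
    simp only [Finset.coe_Ioo, Set.mem_Ioo] at ha hb
    simp only at h
    omega

lemma sum_univ_zmod (p : ℕ) [NeZero p] (hp : p.Prime) (hodd : Odd p) :
    ∑ x : ZMod p, x = 0 := by
  haveI : Fact p.Prime := ⟨hp⟩
  have h2 : (2 : ZMod p) ≠ 0 := by
    intro h
    have h' := (ZMod.natCast_eq_zero_iff 2 p).mp (by exact_mod_cast h)
    have := (Nat.prime_dvd_prime_iff_eq hp Nat.prime_two).mp h'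
    rcases hodd with ⟨k, hk⟩; omega
  have hneg : ∑ x : ZMod p, x = ∑ x : ZMod p, -x :=
    Fintype.sum_bijective _ neg_involutive.bijective _ _ (fun x => (neg_neg x).symm)
  have h3 : (2 : ZMod p) * ∑ x : ZMod p, x = 0 := by
    rw [two_mul]
    nth_rewrite 2 [hneg]
    rw [← Finset.sum_add_distrib]
    simp
  exact (mul_eq_zero.mp h3).resolve_left h2

lemma sum_range_to_univ (p : ℕ) [NeZero p] (f : ZMod p → ZMod p) :
    ∑ t ∈ Finset.range p, f (t : ZMod p) = ∑ x : ZMod p, f x := by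
  refine Finset.sum_nbij' (fun t => ((t : ZMod p))) (fun x => x.val) ?_ ?_ ?_ ?_ ?_
  · intro t ht; exact Finset.mem_univ _
  · intro x _; exact Finset.mem_range.mpr (ZMod.val_lt x)
  · intro t ht; exact ZMod.val_cast_of_lt (Finset.mem_range.mp ht)
  · intro x _; simp [ZMod.natCast_val, ZMod.cast_id]
  · intro t ht; rfl

lemma sum_inv_zero (p : ℕ) (hp : p.Prime) (hodd : Odd p) :
    ∑ t ∈ Finset.Ioo 0 p, ((t : ZMod p))⁻¹ = 0 := by
  haveI : Fact p.Prime := ⟨hp⟩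
  haveI : NeZero p := ⟨hp.ne_zero⟩
  have h0 : ∑ t ∈ Finset.Ioo 0 p, ((t : ZMod p))⁻¹
      = ∑ t ∈ Finset.range p, ((t : ZMod p))⁻¹ := by
    rw [Finset.range_eq_Ico]
    have hppos := hp.pos
    rw [show Finset.Ico 0 p = insert 0 (Finset.Ioo 0 p) by
      ext x
      simp only [Finset.mem_Ico, Finset.mem_insert, Finset.mem_Ioo]
      omega]
    rw [Finset.sum_insert (by simp)]
    simp
  rw [h0, sum_range_to_univ p (fun x => x⁻¹)]
  have h2 : ∑ x : ZMod p, x = ∑ x : ZMod p, x⁻¹ :=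
    Fintype.sum_bijective _ inv_involutive.bijective _ _ (fun x => (inv_inv x).symm)
  rw [← h2, sum_univ_zmod p hp hodd]

lemma prod_one_add {R : Type*} [CommRing R] (c : R) (hc : c * c = 0)
    {ι : Type*} [DecidableEq ι] (s : Finset ι) (x : ι → R) :
    ∏ i ∈ s, (1 + c * x i) = 1 + c * ∑ i ∈ s, x i := by
  induction s using Finset.induction_on with
  | empty => simp
  | @insert a s h ih =>
    rw [Finset.prod_insert h, Finset.sum_insert h, ih]
    have : (1 + c * x a) * (1 + c * ∑ i ∈ s, x i)
        = 1 + c * (x a + ∑ i ∈ s, x i) + (c * c) * (x a * ∑ i ∈ s, x i) := by ring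
    rw [this, hc]
    ring

/-- The key mod `p²` computation: the Fermat quotient equals
`∑ (m t / p) * (m t mod p)⁻¹` in `ZMod p`. -/
lemma key_q (p m : ℕ) (hp : p.Prime) (hpm : ¬ p ∣ m) :
    ((((m : ℤ) ^ (p - 1) - 1) / (p : ℤ) : ℤ) : ZMod p)
      = ∑ t ∈ Finset.Ioo 0 p,
          ((m * t / p : ℕ) : ZMod p) * (((m * t % p : ℕ) : ZMod p))⁻¹ := by
  haveI : Fact p.Prime := ⟨hp⟩
  haveI : NeZero p := ⟨hp.ne_zero⟩
  set N := p ^ 2 with hN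
  haveI : NeZero N := ⟨pow_ne_zero 2 hp.ne_zero⟩
  set T := Finset.Ioo 0 p with hT
  have hcop : ∀ t ∈ T, Nat.Coprime (m * t % p) N := by
    intro t ht
    have h := mem_smul_mod p m hp hpm ht
    simp only [Finset.mem_Ioo] at h
    have hnd : ¬ p ∣ (m * t % p) := fun hd =>
      absurd (Nat.le_of_dvd h.1 hd) (not_le.mpr h.2)
    exact Nat.Coprime.pow_right 2 (Nat.coprime_comm.mp (hp.coprime_iff_not_dvd.mpr hnd))
  have hsu : ∀ t ∈ T, IsUnit ((m * t % p : ℕ) : ZMod N) := by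
    intro t ht
    exact (ZMod.isUnit_iff_coprime _ N).mpr (hcop t ht)
  have hpp : (p : ZMod N) * (p : ZMod N) = 0 := by
    have : ((p * p : ℕ) : ZMod N) = 0 := by
      rw [show p * p = N by rw [hN]; ring, ZMod.natCast_self]
    push_cast at this
    exact this
  have hfact : ∀ t ∈ T, ((m * t : ℕ) : ZMod N)
      = ((m * t % p : ℕ) : ZMod N)
        * (1 + (p : ZMod N) * (((m * t / p : ℕ) : ZMod N)
            * (((m * t % p : ℕ) : ZMod N))⁻¹)) := by
    intro t ht
    have hst := ZMod.mul_inv_of_unit _ (hsu t ht)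
    have hnat : (p * (m * t / p) + m * t % p : ℕ) = m * t := Nat.div_add_mod (m * t) p
    calc ((m * t : ℕ) : ZMod N)
        = ((p * (m * t / p) + m * t % p : ℕ) : ZMod N) := by rw [hnat]
      _ = (p : ZMod N) * ((m * t / p : ℕ) : ZMod N) + ((m * t % p : ℕ) : ZMod N) := by
          push_cast; ring
      _ = ((m * t % p : ℕ) : ZMod N)
            * (1 + (p : ZMod N) * (((m * t / p : ℕ) : ZMod N)
                * (((m * t % p : ℕ) : ZMod N))⁻¹)) := by
          linear_combination (-((p : ZMod N) * ((m * t / p : ℕ) : ZMod N))) * hst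
  have hprod1 : ∏ t ∈ T, ((m * t : ℕ) : ZMod N)
      = (m : ZMod N) ^ (p - 1) * ∏ t ∈ T, (t : ZMod N) := by
    simp only [Nat.cast_mul]
    rw [Finset.prod_mul_distrib, Finset.prod_const, hT, Nat.card_Ioo]
    norm_num
  have hprod2 : ∏ t ∈ T, ((m * t % p : ℕ) : ZMod N) = ∏ t ∈ T, (t : ZMod N) := by
    have h := Finset.prod_image (g := fun t => m * t % p) (s := Finset.Ioo 0 p)
      (f := fun k : ℕ => (k : ZMod N))
      (fun a ha b hb h => injOn_smul_mod p m hp hpm (Finset.mem_coe.mpr ha)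
        (Finset.mem_coe.mpr hb) h)
    rw [image_smul_mod p m hp hpm] at h
    exact h.symm
  have hexp : ∏ t ∈ T, (1 + (p : ZMod N) * (((m * t / p : ℕ) : ZMod N)
      * (((m * t % p : ℕ) : ZMod N))⁻¹))
      = 1 + (p : ZMod N) * ∑ t ∈ T, (((m * t / p : ℕ) : ZMod N)
          * (((m * t % p : ℕ) : ZMod N))⁻¹) := prod_one_add _ hpp T _
  have hmain : (m : ZMod N) ^ (p - 1) * ∏ t ∈ T, (t : ZMod N)
      = (∏ t ∈ T, (t : ZMod N)) * (1 + (p : ZMod N) * ∑ t ∈ T,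
          (((m * t / p : ℕ) : ZMod N) * (((m * t % p : ℕ) : ZMod N))⁻¹)) := by
    rw [← hprod1, ← hexp, ← hprod2, ← Finset.prod_mul_distrib]
    exact Finset.prod_congr rfl hfact
  have hPunit : IsUnit (∏ t ∈ T, (t : ZMod N)) := by
    rw [← Nat.cast_prod]
    refine (ZMod.isUnit_iff_coprime _ N).mpr ?_
    refine Nat.Coprime.prod_left ?_
    intro t ht
    simp only [hT, Finset.mem_Ioo] at ht
    have hnd : ¬ p ∣ t := fun hd => absurd (Nat.le_of_dvd ht.1 hd) (not_le.mpr ht.2)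
    exact Nat.Coprime.pow_right 2 (Nat.coprime_comm.mp (hp.coprime_iff_not_dvd.mpr hnd))
  set X := ∑ t ∈ T, (((m * t / p : ℕ) : ZMod N) * (((m * t % p : ℕ) : ZMod N))⁻¹) with hX
  have hcancel : (m : ZMod N) ^ (p - 1) = 1 + (p : ZMod N) * X := by
    have := hmain
    rw [mul_comm ((m : ZMod N) ^ (p - 1)) _] at this
    exact hPunit.mul_left_cancel this
  have hdvd : (p : ℤ) ∣ (m : ℤ) ^ (p - 1) - 1 := by
    have h0 : (((m : ℤ) ^ (p - 1) - 1 : ℤ) : ZMod p) = 0 := by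
      push_cast
      rw [ZMod.pow_card_sub_one_eq_one (by
        simpa [ZMod.natCast_eq_zero_iff] using hpm)]
      ring
    exact (ZMod.intCast_zmod_eq_zero_iff_dvd _ p).mp h0
  have hq : (p : ℤ) * (((m : ℤ) ^ (p - 1) - 1) / (p : ℤ)) = (m : ℤ) ^ (p - 1) - 1 :=
    Int.mul_ediv_cancel' hdvd
  have hzn : (p : ZMod N) * ((((m : ℤ) ^ (p - 1) - 1) / (p : ℤ) : ℤ) : ZMod N)
      = (p : ZMod N) * X := by
    have h1 : (((p : ℤ) * (((m : ℤ) ^ (p - 1) - 1) / (p : ℤ)) : ℤ) : ZMod N)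
        = (((m : ℤ) ^ (p - 1) - 1 : ℤ) : ZMod N) := by rw [hq]
    push_cast at h1
    rw [h1, hcancel]
    ring
  have hpN : p ∣ N := by rw [hN]; exact dvd_pow_self p two_ne_zero
  have htrans : ∀ A B : ZMod N, (p : ZMod N) * A = (p : ZMod N) * B →
      ZMod.castHom hpN (ZMod p) A = ZMod.castHom hpN (ZMod p) B := by
    intro A B hAB
    obtain ⟨a, rfl⟩ := ZMod.intCast_surjective A
    obtain ⟨b, rfl⟩ := ZMod.intCast_surjective B
    have h0 : (((p : ℤ) * (a - b) : ℤ) : ZMod N) = 0 := by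
      push_cast
      linear_combination hAB
    have h1 : (N : ℤ) ∣ (p : ℤ) * (a - b) := (ZMod.intCast_zmod_eq_zero_iff_dvd _ N).mp h0
    have h2 : (p : ℤ) ∣ (a - b) := by
      have hNe : (N : ℤ) = (p : ℤ) * (p : ℤ) := by rw [hN]; push_cast; ring
      rw [hNe] at h1
      exact (mul_dvd_mul_iff_left (by exact_mod_cast hp.ne_zero : (p:ℤ) ≠ 0)).mp h1
    have h3 : ((a - b : ℤ) : ZMod p) = 0 := (ZMod.intCast_zmod_eq_zero_iff_dvd _ p).mpr h2
    rw [map_intCast, map_intCast]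
    have := sub_eq_zero.mp (by push_cast at h3; linear_combination h3 : ((a : ZMod p) - b) = 0)
    exact this
  have hfin := htrans _ _ hzn
  rw [map_intCast] at hfin
  rw [hfin, hX, map_sum]
  refine Finset.sum_congr rfl ?_
  intro t ht
  rw [map_mul, map_natCast]
  congr 1
  have hst := ZMod.mul_inv_of_unit _ (hsu t ht)
  have hmap := congrArg (ZMod.castHom hpN (ZMod p)) hst
  rw [map_mul, map_one, map_natCast] at hmap
  exact eq_inv_of_mul_eq_one_right hmap |>.symm ▸ rfl

end Aux

/-- `K_p(r, m) = ∑_{0<k<p, m ∣ k - r p} 1/k` computed in `ℤ/pℤ`. -/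
def Kp (p m : ℕ) (r : ℤ) : ZMod p :=
  ∑ k ∈ (Finset.Ioo 0 p).filter (fun k : ℕ => (m : ℤ) ∣ (k : ℤ) - r * p),
    ((k : ZMod p))⁻¹

lemma filter_single (p m : ℕ) (hp : p.Prime) (hm : 0 < m) (hpm : ¬ p ∣ m) {t : ℕ}
    (ht : t ∈ Finset.Ioo 0 p) :
    (Finset.Icc 1 m).filter
        (fun r : ℕ => (m : ℤ) ∣ ((p - m * t % p : ℕ) : ℤ) - (r : ℤ) * p)
      = {m * t / p + 1} := by
  have htIoo := ht
  simp only [Finset.mem_Ioo] at htIoo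
  obtain ⟨hs0, hsp⟩ := Finset.mem_Ioo.mp (mem_smul_mod p m hp hpm ht)
  have hdm : p * (m * t / p) + m * t % p = m * t := Nat.div_add_mod (m * t) p
  have ham : m * t / p + 1 ≤ m := by
    have : m * t / p < m := Nat.div_lt_of_lt_mul (by
      calc m * t < m * p := mul_lt_mul_of_pos_left htIoo.2 hm
      _ = p * m := Nat.mul_comm m p)
    omega
  have hcast : ((p - m * t % p : ℕ) : ℤ) = (p : ℤ) - (m * t % p : ℕ) :=
    Nat.cast_sub hsp.le
  have hd2 : (m : ℤ) ∣ ((p : ℤ) - ((m * t % p : ℕ) : ℤ)) - ((m * t / p : ℕ) + 1) * p := by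
    refine ⟨-(t : ℤ), ?_⟩
    have := congrArg (fun n : ℕ => (n : ℤ)) hdm
    push_cast at this ⊢
    linarith
  ext r
  simp only [Finset.mem_filter, Finset.mem_Icc, Finset.mem_singleton, hcast]
  constructor
  · rintro ⟨⟨hr1, hr2⟩, hdvd⟩
    have hdiff : (m : ℤ) ∣ ((r : ℤ) - ((m * t / p : ℕ) + 1)) * p := by
      have := dvd_sub hd2 hdvd
      have heq : (((p : ℤ) - ((m * t % p : ℕ) : ℤ)) - ((m * t / p : ℕ) + 1) * p)
          - (((p : ℤ) - ((m * t % p : ℕ) : ℤ)) - (r : ℤ) * p)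
          = ((r : ℤ) - ((m * t / p : ℕ) + 1)) * p := by ring
      rwa [heq] at this
    have hco : IsCoprime (m : ℤ) (p : ℤ) := by
      rw [Nat.isCoprime_iff_coprime]
      exact Nat.coprime_comm.mp (hp.coprime_iff_not_dvd.mpr hpm)
    have hds : (m : ℤ) ∣ (r : ℤ) - ((m * t / p : ℕ) + 1) := hco.dvd_of_dvd_mul_right hdiff
    have habs : |(r : ℤ) - ((m * t / p : ℕ) + 1)| < m := by
      have c1 : (r : ℤ) ≤ m := by exact_mod_cast hr2
      have c2 : (1 : ℤ) ≤ r := by exact_mod_cast hr1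
      have c3 : ((m * t / p : ℕ) : ℤ) + 1 ≤ (m : ℤ) := by exact_mod_cast ham
      have c4 : (0 : ℤ) ≤ ((m * t / p : ℕ) : ℤ) := Int.natCast_nonneg _
      rw [abs_lt]
      constructor <;> linarith
    have h5 := Int.eq_zero_of_abs_lt_dvd hds habs
    have h6 : (r : ℤ) = ((m * t / p : ℕ) : ℤ) + 1 := by linarith
    exact_mod_cast h6
  · rintro rfl
    refine ⟨⟨Nat.succ_le_succ (Nat.zero_le _), ham⟩, ?_⟩
    have : ((m * t / p + 1 : ℕ) : ℤ) = ((m * t / p : ℕ) : ℤ) + 1 := by push_cast; ring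
    rw [this]
    exact hd2

theorem stmt_3 (p m : ℕ) (hp : p.Prime) (hodd : Odd p) (hm : 0 < m)
    (hpm : ¬ p ∣ m) :
    ∑ r ∈ Finset.Icc 1 m, (r : ZMod p) * Kp p m (r : ℤ)
      = - (((((m : ℤ) ^ (p - 1) - 1) / (p : ℤ)) : ℤ) : ZMod p) := by
  haveI : Fact p.Prime := ⟨hp⟩
  haveI : NeZero p := ⟨hp.ne_zero⟩
  have hswap : ∑ r ∈ Finset.Icc 1 m, (r : ZMod p) * Kp p m (r : ℤ)
      = ∑ k ∈ Finset.Ioo 0 p, ∑ r ∈ (Finset.Icc 1 m).filter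
          (fun r : ℕ => (m : ℤ) ∣ (k : ℤ) - (r : ℤ) * p),
          (r : ZMod p) * ((k : ZMod p))⁻¹ := by
    unfold Kp
    simp_rw [Finset.mul_sum]
    calc ∑ r ∈ Finset.Icc 1 m, ∑ k ∈ (Finset.Ioo 0 p).filter
            (fun k : ℕ => (m : ℤ) ∣ (k : ℤ) - (r : ℤ) * p),
            (r : ZMod p) * ((k : ZMod p))⁻¹
        = ∑ r ∈ Finset.Icc 1 m, ∑ k ∈ Finset.Ioo 0 p,
            if (m : ℤ) ∣ (k : ℤ) - (r : ℤ) * p then (r : ZMod p) * ((k : ZMod p))⁻¹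
            else 0 := by
          refine Finset.sum_congr rfl fun r _ => ?_
          rw [Finset.sum_filter]
      _ = ∑ k ∈ Finset.Ioo 0 p, ∑ r ∈ Finset.Icc 1 m,
            if (m : ℤ) ∣ (k : ℤ) - (r : ℤ) * p then (r : ZMod p) * ((k : ZMod p))⁻¹
            else 0 := Finset.sum_comm
      _ = ∑ k ∈ Finset.Ioo 0 p, ∑ r ∈ (Finset.Icc 1 m).filter
            (fun r : ℕ => (m : ℤ) ∣ (k : ℤ) - (r : ℤ) * p),
            (r : ZMod p) * ((k : ZMod p))⁻¹ := by
          refine Finset.sum_congr rfl fun k _ => ?_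
          rw [Finset.sum_filter]
  rw [hswap]
  -- reindex k = p - (m t mod p)
  have hinjc : ∀ a ∈ Finset.Ioo 0 p, ∀ b ∈ Finset.Ioo 0 p,
      p - m * a % p = p - m * b % p → a = b := by
    intro a ha b hb h
    have hma := Finset.mem_Ioo.mp (mem_smul_mod p m hp hpm ha)
    have hmb := Finset.mem_Ioo.mp (mem_smul_mod p m hp hpm hb)
    have : m * a % p = m * b % p := by omega
    exact injOn_smul_mod p m hp hpm (Finset.mem_coe.mpr ha) (Finset.mem_coe.mpr hb) this
  have himg : Finset.image (fun t => p - m * t % p) (Finset.Ioo 0 p) = Finset.Ioo 0 p := by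
    have hcomp : Finset.image (fun t => p - m * t % p) (Finset.Ioo 0 p)
        = Finset.image (fun k => p - k)
            (Finset.image (fun t => m * t % p) (Finset.Ioo 0 p)) := by
      rw [Finset.image_image]
      rfl
    rw [hcomp, image_smul_mod p m hp hpm, image_sub p]
  have hre : ∑ k ∈ Finset.Ioo 0 p, ∑ r ∈ (Finset.Icc 1 m).filter
        (fun r : ℕ => (m : ℤ) ∣ (k : ℤ) - (r : ℤ) * p),
        (r : ZMod p) * ((k : ZMod p))⁻¹
      = ∑ t ∈ Finset.Ioo 0 p, ∑ r ∈ (Finset.Icc 1 m).filter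
          (fun r : ℕ => (m : ℤ) ∣ ((p - m * t % p : ℕ) : ℤ) - (r : ℤ) * p),
          (r : ZMod p) * (((p - m * t % p : ℕ) : ZMod p))⁻¹ := by
    conv_lhs => rw [← himg]
    rw [Finset.sum_image hinjc]
  rw [hre]
  -- evaluate each inner sum
  have hterm : ∀ t ∈ Finset.Ioo 0 p,
      ∑ r ∈ (Finset.Icc 1 m).filter
          (fun r : ℕ => (m : ℤ) ∣ ((p - m * t % p : ℕ) : ℤ) - (r : ℤ) * p),
          (r : ZMod p) * (((p - m * t % p : ℕ) : ZMod p))⁻¹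
      = -(((m * t / p : ℕ) : ZMod p) * (((m * t % p : ℕ) : ZMod p))⁻¹)
        - (((m * t % p : ℕ) : ZMod p))⁻¹ := by
    intro t ht
    rw [filter_single p m hp hm hpm ht, Finset.sum_singleton]
    have hsp : m * t % p < p := Nat.mod_lt _ hp.pos
    have hneg : ((p - m * t % p : ℕ) : ZMod p) = -(((m * t % p : ℕ) : ZMod p)) := by
      rw [Nat.cast_sub hsp.le, ZMod.natCast_self]
      ring
    rw [hneg, inv_neg]
    push_cast
    ring
  rw [Finset.sum_congr rfl hterm]
  rw [Finset.sum_sub_distrib]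
  have hsinv : ∑ t ∈ Finset.Ioo 0 p, (((m * t % p : ℕ) : ZMod p))⁻¹ = 0 := by
    have h := Finset.sum_image (g := fun t => m * t % p) (s := Finset.Ioo 0 p)
      (f := fun k : ℕ => ((k : ZMod p))⁻¹)
      (fun a ha b hb h => injOn_smul_mod p m hp hpm (Finset.mem_coe.mpr ha)
        (Finset.mem_coe.mpr hb) h)
    rw [image_smul_mod p m hp hpm] at h
    rw [← h, sum_inv_zero p hp hodd]
  rw [hsinv, Finset.sum_neg_distrib, ← key_q p m hp hpm]
  ring
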